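/- Let Φ be a shift-invariant interaction on X = 𝒜^(ℤ^d) with ‖Φ‖_𝒮 = Σ_{Λ finite, 0 ∈ Λ} ‖Φ_Λ‖_∞ < ∞, and let μ be a Borel probability measure on X satisfying the DLR equations: for every finite Λ ⊂ ℤ^d and every Borel set B ⊆ X, μ(B) = ∫ Σ_{w : Λ → 𝒜} γ_Λ(w|y) 1_B(w ∨ y|_{Λᶜ}) dμ(y). Then, with ρ = |𝒜|^{−1} e^{−2‖Φ‖_𝒮}, for every x ∈ X and every n ≥ 1 one has μ({ y ∈ X : y|_{B_n} = x|_{B_n} }) ≥ ρ^{(2n+1)^d}. -/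

import Mathlib

open MeasureTheory Filter Topology
open scoped ENNReal Classical

namespace Freezing

/-- The configuration space `X = 𝒜^(ℤ^d)`. -/
abbrev Cfg (d : ℕ) (A : Type) : Type := (Fin d → ℤ) → A

section Defs

variable {d : ℕ} {A : Type} [Fintype A] [TopologicalSpace A] [DiscreteTopology A]
  [MeasurableSpace A] [BorelSpace A]

/-- The shift action: `(σ^n x)_m = x_{n+m}`. -/
def shift (n : Fin d → ℤ) (x : Cfg d A) : Cfg d A := fun m => x (n + m)

/-- Shift-invariance of a measure. -/
def Invariant (μ : Measure (Cfg d A)) : Prop :=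
  ∀ n : Fin d → ℤ, Measure.map (shift n) μ = μ

/-- Cylinder set `[w]` for a pattern `w` on `E_n = ([0,n-1] ∩ ℤ)^d`. -/
def cylE (n : ℕ) (w : (Fin d → Fin n) → A) : Set (Cfg d A) :=
  { x | ∀ m : Fin d → Fin n, x (fun i => ((m i : ℕ) : ℤ)) = w m }

/-- Measure-theoretic entropy `h(μ) = inf_{n ≥ 1} n^{-d} Σ_w (-μ[w] log μ[w])`. -/
noncomputable def entropy (μ : Measure (Cfg d A)) : ℝ :=
  ⨅ n : {n : ℕ // 1 ≤ n},
    ((n.1 : ℝ) ^ d)⁻¹ *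
      ∑ w : (Fin d → Fin n.1) → A, Real.negMulLog (μ (cylE n.1 w)).toReal

/-- Pressure `p_φ(β) = sup { h(μ) + β ∫ φ dμ }` over shift-invariant probability measures. -/
noncomputable def pressure (φ : Cfg d A → ℝ) (β : ℝ) : ℝ :=
  sSup { r | ∃ μ : Measure (Cfg d A), IsProbabilityMeasure μ ∧ Invariant μ ∧
    r = entropy μ + β * ∫ x, φ x ∂μ }

/-- The set of equilibrium states of `βφ`. -/
def ES (φ : Cfg d A → ℝ) (β : ℝ) : Set (Measure (Cfg d A)) :=
  { μ | IsProbabilityMeasure μ ∧ Invariant μ ∧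
      entropy μ + β * ∫ x, φ x ∂μ = pressure φ β }

/-- `φ` has a freezing phase transition at `βc`. -/
def FreezingPT (φ : Cfg d A → ℝ) (βc : ℝ) : Prop :=
  (∀ β β' : ℝ, βc < β → βc < β' → ES φ β = ES φ β') ∧
  (∀ β β' : ℝ, β < βc → βc < β' → ES φ β ≠ ES φ β')

/-- `s_φ = sup { ∫ φ dμ }` over shift-invariant probability measures. -/
noncomputable def sPhi (φ : Cfg d A → ℝ) : ℝ :=
  sSup { r | ∃ μ : Measure (Cfg d A), IsProbabilityMeasure μ ∧ Invariant μ ∧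
    r = ∫ x, φ x ∂μ }

/-- The set of maximizing measures of `φ`. -/
def MM (φ : Cfg d A → ℝ) : Set (Measure (Cfg d A)) :=
  { μ | IsProbabilityMeasure μ ∧ Invariant μ ∧ (∫ x, φ x ∂μ) = sPhi φ }

/-- `h_φ = sup { h(η) : η ∈ MM(φ) }`. -/
noncomputable def hPhi (φ : Cfg d A → ℝ) : ℝ :=
  sSup { r | ∃ μ ∈ MM φ, r = entropy μ }

/-- The zero-temperature accumulation points of `φ`. -/
def ZTA (φ : Cfg d A → ℝ) : Set (Measure (Cfg d A)) :=
  { μ | IsProbabilityMeasure μ ∧ Invariant μ ∧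
      ∃ (β : ℕ → ℝ) (μs : ℕ → Measure (Cfg d A)),
        Tendsto β atTop atTop ∧ (∀ k, μs k ∈ ES φ (β k)) ∧
        ∀ f : Cfg d A → ℝ, Continuous f →
          Tendsto (fun k => ∫ x, f x ∂(μs k)) atTop (𝓝 (∫ x, f x ∂μ)) }

/-- A subshift: nonempty, closed, invariant under every shift. -/
def IsSubshift (X₀ : Set (Cfg d A)) : Prop :=
  X₀.Nonempty ∧ IsClosed X₀ ∧ ∀ n : Fin d → ℤ, ∀ x ∈ X₀, shift n x ∈ X₀

/-- The language `L_{E_n}(X₀)`: patterns on `E_n` appearing at the origin of points of `X₀`. -/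
def langE (X₀ : Set (Cfg d A)) (n : ℕ) : Set ((Fin d → Fin n) → A) :=
  { w | ∃ x ∈ X₀, ∀ m : Fin d → Fin n, x (fun i => ((m i : ℕ) : ℤ)) = w m }

/-- Topological entropy `h_top(X₀) = inf_{n ≥ 1} n^{-d} log |L_{E_n}(X₀)|`. -/
noncomputable def topEnt (X₀ : Set (Cfg d A)) : ℝ :=
  ⨅ n : {n : ℕ // 1 ≤ n}, ((n.1 : ℝ) ^ d)⁻¹ * Real.log ((langE X₀ n.1).ncard)

/-- A measure of maximal entropy on the subshift `X₀`. -/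
def IsMME (X₀ : Set (Cfg d A)) (μ : Measure (Cfg d A)) : Prop :=
  IsProbabilityMeasure μ ∧ Invariant μ ∧ μ X₀ = 1 ∧ entropy μ = topEnt X₀

/-- Ergodicity: invariant Borel sets have measure `0` or `1`. -/
def ErgodicInv (μ : Measure (Cfg d A)) : Prop :=
  ∀ s : Set (Cfg d A), MeasurableSet s → (∀ n : Fin d → ℤ, shift n ⁻¹' s = s) →
    μ s = 0 ∨ μ s = 1

/-- The `n`-th variation `var_n φ`, over pairs agreeing on `B_n = ([-n,n] ∩ ℤ)^d`. -/
noncomputable def varPot (φ : Cfg d A → ℝ) (n : ℕ) : ℝ :=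
  sSup { r | ∃ x y : Cfg d A,
    (∀ m : Fin d → ℤ, (∀ i, |m i| ≤ (n : ℤ)) → x m = y m) ∧ r = |φ x - φ y| }

/-- Sup-norm `‖m‖_∞` of a site `m ∈ ℤ^d`. -/
def supNorm (m : Fin d → ℤ) : ℕ := Finset.univ.sup fun i => (m i).natAbs

/-- The metric `dist(x,y) = 2^{-min{‖n‖_∞ : x_n ≠ y_n}}`. -/
noncomputable def cfgDist (x y : Cfg d A) : ℝ :=
  if x = y then 0
  else (2 : ℝ) ^
    (-((sInf { k : ℕ | ∃ m : Fin d → ℤ, supNorm m = k ∧ x m ≠ y m } : ℕ) : ℤ))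

/-- Distance from a point to a subshift. -/
noncomputable def distToSub (X₀ : Set (Cfg d A)) (x : Cfg d A) : ℝ :=
  sInf { r | ∃ y ∈ X₀, r = cfgDist x y }

end Defs


section Gibbs

variable {d : ℕ} {A : Type} [Fintype A] [TopologicalSpace A] [DiscreteTopology A]
  [MeasurableSpace A] [BorelSpace A]

/-- The configuration equal to `w` on `Λ` and to `y` off `Λ`. -/
def patch (Λ : Finset (Fin d → ℤ)) (w : {m : Fin d → ℤ // m ∈ Λ} → A) (y : Cfg d A) :
    Cfg d A :=
  fun m => if h : m ∈ Λ then w ⟨m, h⟩ else y m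

/-- The energy `U_Λ(w|y) = Σ_{Λ' ∩ Λ ≠ ∅} Φ_{Λ'}(w ∨ y|_{Λᶜ})`. -/
noncomputable def energy (Φ : Finset (Fin d → ℤ) → Cfg d A → ℝ)
    (Λ : Finset (Fin d → ℤ)) (w : {m : Fin d → ℤ // m ∈ Λ} → A) (y : Cfg d A) : ℝ :=
  ∑' Λ' : {Λ' : Finset (Fin d → ℤ) // (Λ' ∩ Λ).Nonempty}, Φ Λ'.1 (patch Λ w y)

/-- The partition function `Z_Λ(y)`. -/
noncomputable def partFun (Φ : Finset (Fin d → ℤ) → Cfg d A → ℝ)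
    (Λ : Finset (Fin d → ℤ)) (y : Cfg d A) : ℝ :=
  ∑ w : {m : Fin d → ℤ // m ∈ Λ} → A, Real.exp (energy Φ Λ w y)

/-- The Gibbsian specification `γ_Λ(w|y) = e^{U_Λ(w|y)} / Z_Λ(y)`. -/
noncomputable def gibbsSpec (Φ : Finset (Fin d → ℤ) → Cfg d A → ℝ)
    (Λ : Finset (Fin d → ℤ)) (w : {m : Fin d → ℤ // m ∈ Λ} → A) (y : Cfg d A) : ℝ :=
  Real.exp (energy Φ Λ w y) / partFun Φ Λ y

/-- The norm `‖Φ‖_𝒮 = Σ_{Λ ∋ 0} ‖Φ_Λ‖_∞`. -/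
noncomputable def normS (Φ : Finset (Fin d → ℤ) → Cfg d A → ℝ) : ℝ :=
  ∑' Λ : {Λ : Finset (Fin d → ℤ) // (0 : Fin d → ℤ) ∈ Λ}, ⨆ x : Cfg d A, |Φ Λ.1 x|

end Gibbs

section Aux

variable {d : ℕ} {A : Type}

lemma shift_surjective (n : Fin d → ℤ) : Function.Surjective (shift n : Cfg d A → Cfg d A) := by
  intro x
  refine ⟨shift (-n) x, ?_⟩
  funext m
  show x (-n + (n + m)) = x m
  rw [neg_add_cancel_left]

end Aux

/-- If `Φ` is an absolutely summable shift-invariant interaction and `μ`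
satisfies the DLR equations for the Gibbsian specification of `Φ`, then every cylinder on
`B_n = ([-n,n] ∩ ℤ)^d` has `μ`-measure at least `ρ^{(2n+1)^d}` with
`ρ = |𝒜|⁻¹ e^{-2‖Φ‖_𝒮}`. -/
theorem statement17 (d : ℕ) (hd : 1 ≤ d) (A : Type) [Fintype A] [Nonempty A]
    [TopologicalSpace A] [DiscreteTopology A] [MeasurableSpace A] [BorelSpace A]
    (Φ : Finset (Fin d → ℤ) → Cfg d A → ℝ)
    (hcont : ∀ Λ, Continuous (Φ Λ))
    (hloc : ∀ (Λ : Finset (Fin d → ℤ)) (x y : Cfg d A),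
      (∀ m ∈ Λ, x m = y m) → Φ Λ x = Φ Λ y)
    (hcov : ∀ (Λ : Finset (Fin d → ℤ)) (n : Fin d → ℤ) (x : Cfg d A),
      Φ (Λ.image (fun k => k + n)) x = Φ Λ (shift n x))
    (hsum : Summable fun Λ : {Λ : Finset (Fin d → ℤ) // (0 : Fin d → ℤ) ∈ Λ} =>
      ⨆ x : Cfg d A, |Φ Λ.1 x|)
    (μ : Measure (Cfg d A)) (hμ : IsProbabilityMeasure μ)
    (hDLR : ∀ (Λ : Finset (Fin d → ℤ)) (B : Set (Cfg d A)), MeasurableSet B →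
      (μ B).toReal = ∫ y, (∑ w : {m : Fin d → ℤ // m ∈ Λ} → A,
        gibbsSpec Φ Λ w y * Set.indicator B (fun _ => (1 : ℝ)) (patch Λ w y)) ∂μ) :
    ∀ (x : Cfg d A) (n : ℕ), 1 ≤ n →
      ((Fintype.card A : ℝ)⁻¹ * Real.exp (-2 * normS Φ)) ^ ((2 * n + 1) ^ d) ≤
        (μ { y : Cfg d A | ∀ m : Fin d → ℤ, (∀ i, |m i| ≤ (n : ℤ)) → y m = x m }).toReal := by
  haveI := hμ
  intro x n hn
  set Λ : Finset (Fin d → ℤ) := Fintype.piFinset (fun _ : Fin d => Finset.Icc (-(n:ℤ)) (n:ℤ)) with hΛdef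
  have hmem : ∀ m : Fin d → ℤ, m ∈ Λ ↔ ∀ i, |m i| ≤ (n : ℤ) := by
    intro m
    simp [hΛdef, Fintype.mem_piFinset, Finset.mem_Icc, abs_le, and_comm]
  have hcard : Λ.card = (2 * n + 1) ^ d := by
    rw [hΛdef, Fintype.card_piFinset]
    simp only [Int.card_Icc]
    rw [Finset.prod_const, Finset.card_univ, Fintype.card_fin]
    congr 1
    omega
  -- the pattern type
  set W := ({m : Fin d → ℤ // m ∈ Λ} → A) with hWdef
  set w₀ : W := fun m => x m.1 with hw₀def
  -- bddAbove of |Φ Λ₀|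
  have bdd : ∀ Λ₀ : Finset (Fin d → ℤ), BddAbove (Set.range fun z : Cfg d A => |Φ Λ₀ z|) := by
    intro Λ₀
    have h := (isCompact_univ (X := Cfg d A)).bddAbove_image ((hcont Λ₀).abs.continuousOn)
    rwa [Set.image_univ] at h
  -- translated sup
  have hiSup_shift : ∀ (Λ₀ : Finset (Fin d → ℤ)) (m : Fin d → ℤ),
      (⨆ z : Cfg d A, |Φ (Λ₀.image (fun k => k + m)) z|) = ⨆ z : Cfg d A, |Φ Λ₀ z| := by
    intro Λ₀ m
    have h1 : (fun z : Cfg d A => |Φ (Λ₀.image (fun k => k + m)) z|)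
        = (fun z => |Φ Λ₀ z|) ∘ (shift m) := by
      funext z
      show |Φ (Λ₀.image (fun k => k + m)) z| = |Φ Λ₀ (shift m z)|
      rw [hcov]
    rw [iSup, iSup, h1, Set.range_comp, (shift_surjective m).range_eq, Set.image_univ]
  -- index set and dominating function
  set S := {Λ' : Finset (Fin d → ℤ) // (Λ' ∩ Λ).Nonempty} with hSdef
  set g : S → ℝ := fun Λ' => ⨆ z : Cfg d A, |Φ Λ'.1 z| with hgdef
  have gnonneg : ∀ Λ' : S, 0 ≤ g Λ' := fun Λ' => Real.iSup_nonneg fun z => abs_nonneg _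
  -- the injection
  set T := ({m : Fin d → ℤ // m ∈ Λ} × {Λ₀ : Finset (Fin d → ℤ) // (0 : Fin d → ℤ) ∈ Λ₀}) with hTdef
  set h : T → ℝ := fun p => ⨆ z : Cfg d A, |Φ p.2.1 z| with hhdef
  have hnonneg : ∀ p : T, 0 ≤ h p := fun p => Real.iSup_nonneg fun z => abs_nonneg _
  have hsumh : Summable h := by
    rw [summable_prod_of_nonneg hnonneg]
    exact ⟨fun a => hsum, Summable.of_finite⟩
  have htsumh : ∑' p : T, h p = (Λ.card : ℝ) * normS Φ := by
    rw [Summable.tsum_prod' hsumh (fun a => hsum)]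
    have : ∀ a : {m : Fin d → ℤ // m ∈ Λ},
        (∑' b : {Λ₀ : Finset (Fin d → ℤ) // (0 : Fin d → ℤ) ∈ Λ₀}, h (a, b)) = normS Φ :=
      fun a => rfl
    rw [tsum_congr this, tsum_fintype, Finset.sum_const, Finset.card_univ, Fintype.card_coe,
      nsmul_eq_mul]
  have subinj : ∀ m : Fin d → ℤ, Function.Injective (fun k : Fin d → ℤ => k - m) := by
    intro m u v huv
    simpa using congrArg (fun k => k + m) huv
  set ι : S → T := fun Λ' =>
    (⟨Λ'.2.choose, (Finset.mem_inter.mp Λ'.2.choose_spec).2⟩,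
     ⟨Λ'.1.image (fun k => k - Λ'.2.choose),
      Finset.mem_image.mpr ⟨Λ'.2.choose, (Finset.mem_inter.mp Λ'.2.choose_spec).1, sub_self _⟩⟩)
    with hιdef
  have ιinj : Function.Injective ι := by
    intro a b hab
    have h1 : a.2.choose = b.2.choose := congrArg (fun p => p.1.1) hab
    have h2 : a.1.image (fun k => k - a.2.choose) = b.1.image (fun k => k - b.2.choose) :=
      congrArg (fun p => p.2.1) hab
    rw [h1] at h2
    exact Subtype.ext (Finset.image_injective (subinj b.2.choose) h2)
  have hrecover : ∀ Λ' : S,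
      (Λ'.1.image (fun k => k - Λ'.2.choose)).image (fun k => k + Λ'.2.choose) = Λ'.1 := by
    intro Λ'
    rw [Finset.image_image]
    have : ((fun k => k + Λ'.2.choose) ∘ (fun k => k - Λ'.2.choose)) = id := by
      funext k; simp
    rw [this, Finset.image_id]
  have hg_eq : ∀ Λ' : S, g Λ' = h (ι Λ') := by
    intro Λ'
    show (⨆ z : Cfg d A, |Φ Λ'.1 z|) = ⨆ z : Cfg d A, |Φ (Λ'.1.image (fun k => k - Λ'.2.choose)) z|
    conv_lhs => rw [← hrecover Λ']
    rw [hiSup_shift]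
  have hgsum : Summable g := by
    have : g = h ∘ ι := funext hg_eq
    rw [this]
    exact hsumh.comp_injective ιinj
  have hgle : ∑' Λ' : S, g Λ' ≤ (Λ.card : ℝ) * normS Φ := by
    rw [← htsumh]
    exact Summable.tsum_le_tsum_of_inj ι ιinj (fun c _ => hnonneg c) (fun Λ' => le_of_eq (hg_eq Λ'))
      hgsum hsumh
  -- energy bound
  set c : ℝ := (Λ.card : ℝ) * normS Φ with hcdef
  have hbound : ∀ (w : W) (y : Cfg d A), |energy Φ Λ w y| ≤ c := by
    intro w y
    have hterm : ∀ Λ' : S, ‖Φ Λ'.1 (patch Λ w y)‖ ≤ g Λ' := by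
      intro Λ'
      rw [Real.norm_eq_abs]
      exact le_ciSup (bdd Λ'.1) _
    have hs1 : Summable fun Λ' : S => ‖Φ Λ'.1 (patch Λ w y)‖ :=
      Summable.of_nonneg_of_le (fun _ => norm_nonneg _) hterm hgsum
    calc |energy Φ Λ w y| ≤ ∑' Λ' : S, ‖Φ Λ'.1 (patch Λ w y)‖ := by
          rw [← Real.norm_eq_abs]
          exact norm_tsum_le_tsum_norm hs1
      _ ≤ ∑' Λ' : S, g Λ' := Summable.tsum_le_tsum hterm hs1 hgsum
      _ ≤ c := hgle
  -- partition function bounds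
  have hcardA : (0 : ℝ) < (Fintype.card A : ℝ) := by exact_mod_cast Fintype.card_pos
  have hNpos : (0 : ℝ) < (Fintype.card A : ℝ) ^ Λ.card := pow_pos hcardA _
  have hWcard : (Fintype.card W : ℝ) = (Fintype.card A : ℝ) ^ Λ.card := by
    have hWc : Fintype.card W = Fintype.card A ^ Λ.card := by
      show Fintype.card ({m : Fin d → ℤ // m ∈ Λ} → A) = _
      rw [Fintype.card_fun, Fintype.card_coe]
    rw [hWc]
    push_cast
    ring
  have hZpos : ∀ y : Cfg d A, 0 < partFun Φ Λ y := by
    intro y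
    exact Finset.sum_pos (fun w _ => Real.exp_pos _) Finset.univ_nonempty
  have hZle : ∀ y : Cfg d A, partFun Φ Λ y ≤ (Fintype.card A : ℝ) ^ Λ.card * Real.exp c := by
    intro y
    calc partFun Φ Λ y ≤ ∑ w : W, Real.exp c :=
          Finset.sum_le_sum fun w _ => Real.exp_le_exp.mpr ((abs_le.mp (hbound w y)).2)
      _ = (Fintype.card W : ℝ) * Real.exp c := by
          rw [Finset.sum_const, Finset.card_univ, nsmul_eq_mul]
      _ = (Fintype.card A : ℝ) ^ Λ.card * Real.exp c := by rw [hWcard]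
  -- the key ρ^K computation
  set ρ : ℝ := (Fintype.card A : ℝ)⁻¹ * Real.exp (-2 * normS Φ) with hρdef
  have hkey : ρ ^ Λ.card = Real.exp (-c) / ((Fintype.card A : ℝ) ^ Λ.card * Real.exp c) := by
    rw [hρdef, mul_pow, inv_pow, ← Real.exp_nat_mul, eq_div_iff (ne_of_gt (by positivity))]
    have h1 : (Λ.card : ℝ) * (-2 * normS Φ) + c = -c := by rw [hcdef]; ring
    calc ((Fintype.card A : ℝ) ^ Λ.card)⁻¹ * Real.exp ((Λ.card : ℝ) * (-2 * normS Φ)) *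
          ((Fintype.card A : ℝ) ^ Λ.card * Real.exp c)
        = (((Fintype.card A : ℝ) ^ Λ.card)⁻¹ * ((Fintype.card A : ℝ) ^ Λ.card)) *
          (Real.exp ((Λ.card : ℝ) * (-2 * normS Φ)) * Real.exp c) := by ring
      _ = 1 * Real.exp ((Λ.card : ℝ) * (-2 * normS Φ) + c) := by
          rw [inv_mul_cancel₀ (ne_of_gt hNpos), Real.exp_add]
      _ = Real.exp (-c) := by rw [one_mul, h1]
  have hγ : ∀ y : Cfg d A, ρ ^ Λ.card ≤ gibbsSpec Φ Λ w₀ y := by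
    intro y
    rw [hkey]
    exact div_le_div₀ (le_of_lt (Real.exp_pos _))
      (Real.exp_le_exp.mpr (abs_le.mp (hbound w₀ y)).1) (hZpos y) (hZle y)
  -- the cylinder set
  set B : Set (Cfg d A) :=
    { y : Cfg d A | ∀ m : Fin d → ℤ, (∀ i, |m i| ≤ (n : ℤ)) → y m = x m } with hBdef
  have hB : MeasurableSet B := by
    have hBeq : B = ⋂ (m : Fin d → ℤ) (_ : m ∈ Λ), (fun y : Cfg d A => y m) ⁻¹' {x m} := by
      ext y
      simp only [hBdef, Set.mem_setOf_eq, Set.mem_iInter, Set.mem_preimage,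
        Set.mem_singleton_iff]
      constructor
      · intro hy m hm; exact hy m ((hmem m).mp hm)
      · intro hy m hm; exact hy m ((hmem m).mpr hm)
    rw [hBeq]
    exact MeasurableSet.iInter fun m => MeasurableSet.iInter fun _ =>
      (measurable_pi_apply m) ((isOpen_discrete ({x m} : Set A)).measurableSet)
  -- indicator simplification
  have hpatch : ∀ (w : W) (y : Cfg d A), patch Λ w y ∈ B ↔ w = w₀ := by
    intro w y
    constructor
    · intro hy
      funext m
      have h1 := hy m.1 ((hmem m.1).mp m.2)
      have h2 : patch Λ w y m.1 = w m := by
        simp only [patch, dif_pos m.2]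
      rw [h2] at h1
      exact h1
    · rintro rfl
      intro m hm
      have hmΛ := (hmem m).mpr hm
      simp only [hBdef, patch, dif_pos hmΛ, hw₀def]
  have hint : ∀ y : Cfg d A,
      (∑ w : W, gibbsSpec Φ Λ w y * Set.indicator B (fun _ => (1 : ℝ)) (patch Λ w y))
        = gibbsSpec Φ Λ w₀ y := by
    intro y
    have hterm : ∀ w : W, gibbsSpec Φ Λ w y * Set.indicator B (fun _ => (1 : ℝ)) (patch Λ w y)
        = if w = w₀ then gibbsSpec Φ Λ w y else 0 := by
      intro w
      rw [Set.indicator_apply]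
      by_cases hw : w = w₀
      · rw [if_pos ((hpatch w y).mpr hw), if_pos hw, mul_one]
      · rw [if_neg (fun hc => hw ((hpatch w y).mp hc)), if_neg hw, mul_zero]
    rw [Finset.sum_congr rfl (fun w _ => hterm w), Finset.sum_ite_eq' Finset.univ w₀,
      if_pos (Finset.mem_univ _)]
  -- continuity and integrability
  have hpatchc : ∀ w : W, Continuous fun y : Cfg d A => patch Λ w y := by
    intro w
    apply continuous_pi
    intro m
    by_cases hm : m ∈ Λ
    · simpa only [patch, dif_pos hm] using (continuous_const : Continuous fun _ : Cfg d A => w ⟨m, hm⟩)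
    · simpa only [patch, dif_neg hm] using (continuous_apply m : Continuous fun y : Cfg d A => y m)
  have henergyc : ∀ w : W, Continuous fun y : Cfg d A => energy Φ Λ w y := by
    intro w
    have : (fun y : Cfg d A => energy Φ Λ w y)
        = fun y => ∑' Λ' : S, Φ Λ'.1 (patch Λ w y) := rfl
    rw [this]
    apply continuous_tsum (fun Λ' : S => (hcont Λ'.1).comp (hpatchc w)) hgsum
    intro Λ' y
    rw [Real.norm_eq_abs]
    exact le_ciSup (bdd Λ'.1) _
  have hZc : Continuous fun y : Cfg d A => partFun Φ Λ y := by
    apply continuous_finset_sum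
    intro w _
    exact Real.continuous_exp.comp (henergyc w)
  have hγc : Continuous fun y : Cfg d A => gibbsSpec Φ Λ w₀ y :=
    (Real.continuous_exp.comp (henergyc w₀)).div hZc fun y => ne_of_gt (hZpos y)
  have hγint : Integrable (fun y : Cfg d A => gibbsSpec Φ Λ w₀ y) μ :=
    hγc.integrable_of_hasCompactSupport (HasCompactSupport.of_compactSpace _)
  -- finish
  have hfinal : ρ ^ Λ.card ≤ (μ B).toReal := by
    calc ρ ^ Λ.card = ∫ _ : Cfg d A, ρ ^ Λ.card ∂μ := by
          rw [integral_const, probReal_univ, one_smul]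
      _ ≤ ∫ y, gibbsSpec Φ Λ w₀ y ∂μ := integral_mono (integrable_const _) hγint hγ
      _ = (μ B).toReal := by
          rw [hDLR Λ B hB]
          exact integral_congr_ae (Filter.EventuallyEq.of_eq (funext hint)).symm
  rw [← hcard]
  exact hfinal

end Freezing
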